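/- Let r_1,…,r_N ≥ 0. Define s̄_1 = Σ i^a r_i, s̄_2 = Σ i^{a+ϱ} r_i, s̄_3 = Σ i^{a+2ϱ} r_i for a > 0, ϱ > 0, and set δ̂_1 = s̄_2 − s̄_1, δ̂_2 = s̄_3 − s̄_2. Then δ̂_1 ≥ 0, δ̂_2 ≥ 0, and δ̂_2 ≥ 2^ϱ · δ̂_1. In particular, if δ̂_1 > 0 then (δ̂_2/δ̂_1)^{1/ϱ} ≥ 2. -/
import Mathlib


open Finset Real

theorem frolov_hat_delta_bounds (N : ℕ) (r : ℕ → ℝ) (a ϱ : ℝ)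
    (hr : ∀ i ∈ Finset.Icc 1 N, 0 ≤ r i)
    (ha : 0 < a) (hϱ : 0 < ϱ)
    (s₁ s₂ s₃ δ₁ δ₂ : ℝ)
    (hs₁ : s₁ = ∑ i ∈ Finset.Icc 1 N, (i : ℝ) ^ a * r i)
    (hs₂ : s₂ = ∑ i ∈ Finset.Icc 1 N, (i : ℝ) ^ (a + ϱ) * r i)
    (hs₃ : s₃ = ∑ i ∈ Finset.Icc 1 N, (i : ℝ) ^ (a + 2 * ϱ) * r i)
    (hδ₁ : δ₁ = s₂ - s₁) (hδ₂ : δ₂ = s₃ - s₂) :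
    0 ≤ δ₁ ∧ 0 ≤ δ₂ ∧ (2 : ℝ) ^ ϱ * δ₁ ≤ δ₂ ∧
    (0 < δ₁ → (2 : ℝ) ≤ (δ₂ / δ₁) ^ (1 / ϱ)) := by
  have h1 : δ₁ = ∑ i ∈ Finset.Icc 1 N, ((i : ℝ) ^ (a + ϱ) - (i : ℝ) ^ a) * r i := by
    rw [hδ₁, hs₁, hs₂, ← Finset.sum_sub_distrib]
    exact Finset.sum_congr rfl fun i _ => by ring
  have h2 : δ₂ = ∑ i ∈ Finset.Icc 1 N, ((i : ℝ) ^ (a + 2 * ϱ) - (i : ℝ) ^ (a + ϱ)) * r i := by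
    rw [hδ₂, hs₂, hs₃, ← Finset.sum_sub_distrib]
    exact Finset.sum_congr rfl fun i _ => by ring
  have hi1 : ∀ i ∈ Finset.Icc 1 N, (1 : ℝ) ≤ (i : ℝ) := by
    intro i hi
    have := (Finset.mem_Icc.mp hi).1
    exact_mod_cast this
  have hd1 : 0 ≤ δ₁ := by
    rw [h1]
    refine Finset.sum_nonneg fun i hi => mul_nonneg ?_ (hr i hi)
    have := Real.rpow_le_rpow_of_exponent_le (hi1 i hi) (by linarith : a ≤ a + ϱ)
    linarith
  have hd2 : 0 ≤ δ₂ := by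
    rw [h2]
    refine Finset.sum_nonneg fun i hi => mul_nonneg ?_ (hr i hi)
    have := Real.rpow_le_rpow_of_exponent_le (hi1 i hi) (by linarith : a + ϱ ≤ a + 2 * ϱ)
    linarith
  have hkey : (2 : ℝ) ^ ϱ * δ₁ ≤ δ₂ := by
    rw [h1, h2, Finset.mul_sum]
    refine Finset.sum_le_sum fun i hi => ?_
    have hi1' := hi1 i hi
    have hipos : (0 : ℝ) < i := by linarith
    have hterm : (i : ℝ) ^ (a + 2 * ϱ) - (i : ℝ) ^ (a + ϱ)
        = (i : ℝ) ^ ϱ * ((i : ℝ) ^ (a + ϱ) - (i : ℝ) ^ a) := by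
      rw [mul_sub, ← Real.rpow_add hipos, ← Real.rpow_add hipos]
      ring_nf
    rw [hterm]
    have hnn : 0 ≤ (i : ℝ) ^ (a + ϱ) - (i : ℝ) ^ a := by
      have := Real.rpow_le_rpow_of_exponent_le hi1' (by linarith : a ≤ a + ϱ)
      linarith
    rcases eq_or_lt_of_le (Finset.mem_Icc.mp hi).1 with h | h
    · have : (i : ℝ) = 1 := by exact_mod_cast h.symm
      simp [this]
    · have h2i : (2 : ℝ) ≤ (i : ℝ) := by exact_mod_cast h
      have h2p : (2 : ℝ) ^ ϱ ≤ (i : ℝ) ^ ϱ :=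
        Real.rpow_le_rpow (by norm_num) h2i hϱ.le
      have := mul_le_mul_of_nonneg_right h2p (mul_nonneg hnn (hr i hi))
      nlinarith [hr i hi]
  refine ⟨hd1, hd2, hkey, fun hpos => ?_⟩
  have hdiv : (2 : ℝ) ^ ϱ ≤ δ₂ / δ₁ := (le_div_iff₀ hpos).mpr hkey
  have := Real.rpow_le_rpow (Real.rpow_nonneg (by norm_num) ϱ) hdiv (by positivity : (0:ℝ) ≤ 1 / ϱ)
  rwa [← Real.rpow_mul (by norm_num), mul_one_div_cancel hϱ.ne', Real.rpow_one] at this
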